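/- Let R₁ and R₂ be coherent commutative rings, each with finite Gorenstein weak dimension. If N is a strongly Gorenstein flat R₁-module, then N × 0 is a strongly Gorenstein flat module over the product ring R₁ × R₂. -/

import Mathlib

universe u v

section Defs

variable (R : Type u) [CommRing R]

/-- An `R`-module `M` is *Gorenstein projective* if there is a doubly infinite exact
sequence of projective modules `⋯ → P i → P (i+1) → ⋯` with `M` isomorphic to the image
of `P 0 → P 1`, which remains exact after applying `Hom_R(−, Q)` for every projective `Q`. -/
def IsGorensteinProjective (M : ModuleCat.{v} R) : Prop :=
  ∃ (P : ℤ → ModuleCat.{v} R) (d : ∀ i : ℤ, P i →ₗ[R] P (i + 1)),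
    (∀ i : ℤ, Module.Projective R (P i)) ∧
    (∀ i : ℤ, LinearMap.range (d i) = LinearMap.ker (d (i + 1))) ∧
    Nonempty (M ≃ₗ[R] LinearMap.range (d 0)) ∧
    (∀ (Q : ModuleCat.{v} R), Module.Projective R Q →
      ∀ (i : ℤ) (g : P (i + 1) →ₗ[R] Q), g ∘ₗ d i = 0 →
        ∃ h : P (i + 1 + 1) →ₗ[R] Q, h ∘ₗ d (i + 1) = g)

/-- An `R`-module `M` is *strongly Gorenstein projective* if there is an exact sequence
`⋯ → P → P → P → ⋯` with one projective module `P` and one map `f`, `M ≅ Im f`,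
which remains exact after applying `Hom_R(−, Q)` for every projective `Q`. -/
def IsStronglyGorensteinProjective (M : ModuleCat.{v} R) : Prop :=
  ∃ (P : ModuleCat.{v} R) (f : P →ₗ[R] P),
    Module.Projective R P ∧
    LinearMap.range f = LinearMap.ker f ∧
    Nonempty (M ≃ₗ[R] LinearMap.range f) ∧
    (∀ (Q : ModuleCat.{v} R), Module.Projective R Q →
      ∀ g : P →ₗ[R] Q, g ∘ₗ f = 0 → ∃ h : P →ₗ[R] Q, h ∘ₗ f = g)

/-- Gorenstein injective modules, dual to Gorenstein projective ones. -/
def IsGorensteinInjective (M : ModuleCat.{v} R) : Prop :=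
  ∃ (E : ℤ → ModuleCat.{v} R) (d : ∀ i : ℤ, E i →ₗ[R] E (i + 1)),
    (∀ i : ℤ, Module.Injective R (E i)) ∧
    (∀ i : ℤ, LinearMap.range (d i) = LinearMap.ker (d (i + 1))) ∧
    Nonempty (M ≃ₗ[R] LinearMap.range (d 0)) ∧
    (∀ (I : ModuleCat.{v} R), Module.Injective R I →
      ∀ (i : ℤ) (g : I →ₗ[R] E (i + 1)), d (i + 1) ∘ₗ g = 0 →
        ∃ h : I →ₗ[R] E i, d i ∘ₗ h = g)

/-- Strongly Gorenstein injective modules. -/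
def IsStronglyGorensteinInjective (M : ModuleCat.{v} R) : Prop :=
  ∃ (E : ModuleCat.{v} R) (f : E →ₗ[R] E),
    Module.Injective R E ∧
    LinearMap.range f = LinearMap.ker f ∧
    Nonempty (M ≃ₗ[R] LinearMap.range f) ∧
    (∀ (I : ModuleCat.{v} R), Module.Injective R I →
      ∀ g : I →ₗ[R] E, f ∘ₗ g = 0 → ∃ h : I →ₗ[R] E, f ∘ₗ h = g)

/-- An `R`-module `M` is *Gorenstein flat* if there is a doubly infinite exact sequence of
flat modules with `M` isomorphic to the image of the middle map, which remains exact after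
applying `− ⊗_R I` for every injective `R`-module `I`. -/
def IsGorensteinFlat (M : ModuleCat.{v} R) : Prop :=
  ∃ (F : ℤ → ModuleCat.{v} R) (d : ∀ i : ℤ, F i →ₗ[R] F (i + 1)),
    (∀ i : ℤ, Module.Flat R (F i)) ∧
    (∀ i : ℤ, LinearMap.range (d i) = LinearMap.ker (d (i + 1))) ∧
    Nonempty (M ≃ₗ[R] LinearMap.range (d 0)) ∧
    (∀ (I : ModuleCat.{v} R), Module.Injective R I →
      ∀ i : ℤ, LinearMap.range (LinearMap.rTensor (R := R) I (d i)) =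
        LinearMap.ker (LinearMap.rTensor (R := R) I (d (i + 1))))

/-- Strongly Gorenstein flat modules. -/
def IsStronglyGorensteinFlat (M : ModuleCat.{v} R) : Prop :=
  ∃ (F : ModuleCat.{v} R) (f : F →ₗ[R] F),
    Module.Flat R F ∧
    LinearMap.range f = LinearMap.ker f ∧
    Nonempty (M ≃ₗ[R] LinearMap.range f) ∧
    (∀ (I : ModuleCat.{v} R), Module.Injective R I →
      LinearMap.range (LinearMap.rTensor (R := R) I f) =
        LinearMap.ker (LinearMap.rTensor (R := R) I f))

/-- `GorensteinProjDimLE R n M` means the Gorenstein projective dimension of `M` is `≤ n`: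
there is an exact sequence `0 → G_n → ⋯ → G_0 → M → 0` with all `G_i` Gorenstein projective. -/
def GorensteinProjDimLE : ℕ → ModuleCat.{v} R → Prop
  | 0, M => IsGorensteinProjective R M
  | n + 1, M =>
    ∃ (G K : ModuleCat.{v} R) (f : K →ₗ[R] G) (g : G →ₗ[R] M),
      IsGorensteinProjective R G ∧ Function.Injective f ∧ Function.Surjective g ∧
      LinearMap.range f = LinearMap.ker g ∧ GorensteinProjDimLE n K

/-- `GorensteinFlatDimLE R n M` means the Gorenstein flat dimension of `M` is `≤ n`. -/
def GorensteinFlatDimLE : ℕ → ModuleCat.{v} R → Prop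
  | 0, M => IsGorensteinFlat R M
  | n + 1, M =>
    ∃ (G K : ModuleCat.{v} R) (f : K →ₗ[R] G) (g : G →ₗ[R] M),
      IsGorensteinFlat R G ∧ Function.Injective f ∧ Function.Surjective g ∧
      LinearMap.range f = LinearMap.ker g ∧ GorensteinFlatDimLE n K

/-- `ProjDimLE R n M` means the projective dimension of `M` is `≤ n`. -/
def ProjDimLE : ℕ → ModuleCat.{v} R → Prop
  | 0, M => Module.Projective R M
  | n + 1, M =>
    ∃ (G K : ModuleCat.{v} R) (f : K →ₗ[R] G) (g : G →ₗ[R] M),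
      Module.Projective R G ∧ Function.Injective f ∧ Function.Surjective g ∧
      LinearMap.range f = LinearMap.ker g ∧ ProjDimLE n K

/-- `FlatDimLE R n M` means the flat dimension of `M` is `≤ n`. -/
def FlatDimLE : ℕ → ModuleCat.{v} R → Prop
  | 0, M => Module.Flat R M
  | n + 1, M =>
    ∃ (G K : ModuleCat.{v} R) (f : K →ₗ[R] G) (g : G →ₗ[R] M),
      Module.Flat R G ∧ Function.Injective f ∧ Function.Surjective g ∧
      LinearMap.range f = LinearMap.ker g ∧ FlatDimLE n K

/-- A commutative ring is *coherent* if every finitely generated ideal is finitely presented. -/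
def IsCoherentRing : Prop :=
  ∀ I : Ideal R, I.FG → Module.FinitePresentation R I

end Defs


section Aux

open TensorProduct

variable {R₁ : Type u} {R₂ : Type u} [CommRing R₁] [CommRing R₂]

variable (R₁ R₂) in
/-- The `(1,0)`-fixed part of an `R₁ × R₂`-module. -/
def ePart (I : Type v) [AddCommGroup I] [Module (R₁ × R₂) I] :
    Submodule (R₁ × R₂) I where
  carrier := {x | ((1, 0) : R₁ × R₂) • x = x}
  add_mem' := by
    intro a b ha hb
    simp only [Set.mem_setOf_eq, smul_add] at *
    rw [ha, hb]
  zero_mem' := smul_zero _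
  smul_mem' := by
    intro s x hx
    simp only [Set.mem_setOf_eq] at *
    rw [smul_comm, hx]

variable {I : Type v} [AddCommGroup I] [Module (R₁ × R₂) I]

lemma ePart_spec (x : ePart R₁ R₂ I) : ((1, 0) : R₁ × R₂) • (x : I) = (x : I) := x.2

lemma ePart_mem (y : I) : (((1, 0) : R₁ × R₂) • y) ∈ ePart R₁ R₂ I := by
  show ((1, 0) : R₁ × R₂) • _ = _
  rw [smul_smul]
  congr 1
  ext <;> simp

/-- The `R₁`-scalar multiplication on `ePart R₁ R₂ I`. -/
def ePartSMul : SMul R₁ (ePart R₁ R₂ I) :=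
  ⟨fun r x => ⟨((r, 0) : R₁ × R₂) • (x : I), by
    show ((1, 0) : R₁ × R₂) • _ = _
    rw [smul_smul]
    congr 1
    ext <;> simp⟩⟩

/-- The `R₁`-module structure on `ePart R₁ R₂ I`. -/
def ePartModule : Module R₁ (ePart R₁ R₂ I) :=
  letI := ePartSMul (R₁ := R₁) (R₂ := R₂) (I := I)
  Module.ofMinimalAxioms
    (fun r x y => Subtype.ext (by
      show ((r, 0) : R₁ × R₂) • ((x : I) + (y : I)) = ((r, 0) : R₁ × R₂) • (x : I) + ((r, 0) : R₁ × R₂) • (y : I)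
      rw [smul_add]))
    (fun r s x => Subtype.ext (by
      show ((r + s, 0) : R₁ × R₂) • (x : I) = ((r, 0) : R₁ × R₂) • (x : I) + ((s, 0) : R₁ × R₂) • (x : I)
      rw [show ((r + s, 0) : R₁ × R₂) = (r, 0) + (s, 0) by ext <;> simp, add_smul]))
    (fun r s x => Subtype.ext (by
      show ((r * s, 0) : R₁ × R₂) • (x : I) = ((r, 0) : R₁ × R₂) • (((s, 0) : R₁ × R₂) • (x : I))
      rw [smul_smul]
      congr 1
      ext <;> simp))
    (fun x => Subtype.ext x.2)

attribute [local instance] ePartModule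

lemma ePartSMul_coe (r : R₁) (x : ePart R₁ R₂ I) :
    ((r • x : ePart R₁ R₂ I) : I) = ((r, 0) : R₁ × R₂) • (x : I) := rfl

lemma ePart_injective (hI : Module.Injective (R₁ × R₂) I) :
    Module.Injective R₁ (ePart R₁ R₂ I) := by
  constructor
  intro X Y _ _ _ _ φ hφ g
  letI : Module (R₁ × R₂) X := Module.compHom X (RingHom.fst R₁ R₂)
  letI : Module (R₁ × R₂) Y := Module.compHom Y (RingHom.fst R₁ R₂)
  letI φS : X →ₗ[R₁ × R₂] Y :=
    { toFun := φ
      map_add' := φ.map_add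
      map_smul' := fun s x => φ.map_smul s.1 x }
  letI gS : X →ₗ[R₁ × R₂] I :=
    { toFun := fun x => (g x : I)
      map_add' := fun a b => by show ((g (a + b) : I)) = (g a : I) + (g b : I); rw [g.map_add]; rfl
      map_smul' := fun s x => by
        show ((g (s.1 • x) : I)) = s • (g x : I)
        rw [g.map_smul, ePartSMul_coe]
        conv_rhs => rw [← ePart_spec (g x), smul_smul]
        congr 1
        ext <;> simp }
  obtain ⟨h, hh⟩ := hI.out φS hφ gS
  refine ⟨{ toFun := fun y => ⟨((1, 0) : R₁ × R₂) • h y, ePart_mem _⟩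
            map_add' := fun a b => Subtype.ext (by
              show ((1, 0) : R₁ × R₂) • h (a + b) = ((1, 0) : R₁ × R₂) • h a + ((1, 0) : R₁ × R₂) • h b
              rw [h.map_add, smul_add])
            map_smul' := fun r y => Subtype.ext (by
              show ((1, 0) : R₁ × R₂) • h (r • y) = ((r, 0) : R₁ × R₂) • (((1, 0) : R₁ × R₂) • h y)
              have hry : r • y = ((r, 0) : R₁ × R₂) • y := rfl
              rw [hry, h.map_smul, smul_smul, smul_smul]
              congr 1
              ext <;> simp) }, fun x => ?_⟩
  refine Subtype.ext ?_
  show ((1, 0) : R₁ × R₂) • h (φ x) = (g x : I)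
  have := hh x
  rw [show h (φ x) = gS x from this]
  exact ePart_spec (g x)

end Aux

section Tensor

open TensorProduct

variable {R₁ : Type u} {R₂ : Type u} [CommRing R₁] [CommRing R₂]
variable {I : Type v} [AddCommGroup I] [Module (R₁ × R₂) I]

attribute [local instance] ePartModule

/-- Projection onto the `(1,0)`-part, as an additive map. -/
def eProj : I →+ ePart R₁ R₂ I :=
  AddMonoidHom.mk' (fun y => ⟨((1, 0) : R₁ × R₂) • y, ePart_mem y⟩)
    (fun a b => Subtype.ext (smul_add _ a b))

lemma eProj_coe (y : I) : ((eProj y : ePart R₁ R₂ I) : I) = ((1, 0) : R₁ × R₂) • y := rfl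

variable {F : Type v} [AddCommGroup F] [Module R₁ F] [Module (R₁ × R₂) F]

/-- Comparison map `F ⊗[R₁×R₂] I →+ F ⊗[R₁] ePart R₁ R₂ I`. -/
noncomputable def ePhi (hcomp : ∀ (s : R₁ × R₂) (x : F), s • x = s.1 • x) :
    F ⊗[R₁ × R₂] I →+ F ⊗[R₁] (ePart R₁ R₂ I) :=
  TensorProduct.liftAddHom
    (AddMonoidHom.mk' (fun x => AddMonoidHom.mk'
        (fun y => x ⊗ₜ[R₁] (eProj y : ePart R₁ R₂ I))
        (fun a b => by
          show x ⊗ₜ[R₁] (eProj (a + b)) = x ⊗ₜ[R₁] (eProj a) + x ⊗ₜ[R₁] (eProj b)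
          rw [map_add, tmul_add]))
      (fun a b => AddMonoidHom.ext fun y => by
        show (a + b) ⊗ₜ[R₁] _ = a ⊗ₜ[R₁] _ + b ⊗ₜ[R₁] _
        rw [add_tmul]))
    (fun s x y => by
      show (s • x) ⊗ₜ[R₁] (eProj y) = x ⊗ₜ[R₁] (eProj (s • y))
      rw [hcomp, smul_tmul]
      congr 1
      refine Subtype.ext ?_
      rw [eProj_coe, ePartSMul_coe, eProj_coe, smul_smul, smul_smul]
      congr 1
      ext <;> simp)

lemma ePhi_tmul (hcomp : ∀ (s : R₁ × R₂) (x : F), s • x = s.1 • x) (x : F) (y : I) :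
    ePhi hcomp (x ⊗ₜ y) = x ⊗ₜ[R₁] (eProj y : ePart R₁ R₂ I) :=
  TensorProduct.liftAddHom_tmul _ _ _ _

/-- Comparison map `F ⊗[R₁] ePart R₁ R₂ I →+ F ⊗[R₁×R₂] I`. -/
noncomputable def ePsi (hcomp : ∀ (s : R₁ × R₂) (x : F), s • x = s.1 • x) :
    F ⊗[R₁] (ePart R₁ R₂ I) →+ F ⊗[R₁ × R₂] I :=
  TensorProduct.liftAddHom
    (AddMonoidHom.mk' (fun x => AddMonoidHom.mk'
        (fun y : ePart R₁ R₂ I => x ⊗ₜ[R₁ × R₂] (y : I))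
        (fun a b => by
          show x ⊗ₜ[R₁ × R₂] ((a + b : ePart R₁ R₂ I) : I) = _
          rw [Submodule.coe_add, tmul_add]))
      (fun a b => AddMonoidHom.ext fun y => by
        show (a + b) ⊗ₜ[R₁ × R₂] _ = a ⊗ₜ[R₁ × R₂] _ + b ⊗ₜ[R₁ × R₂] _
        rw [add_tmul]))
    (fun r x y => by
      show (r • x) ⊗ₜ[R₁ × R₂] (y : I) = x ⊗ₜ[R₁ × R₂] ((r • y : ePart R₁ R₂ I) : I)
      have hx : r • x = ((r, (0 : R₂)) : R₁ × R₂) • x := by rw [hcomp]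
      rw [hx, smul_tmul, ePartSMul_coe])

lemma ePsi_tmul (hcomp : ∀ (s : R₁ × R₂) (x : F), s • x = s.1 • x) (x : F)
    (y : ePart R₁ R₂ I) : ePsi hcomp (x ⊗ₜ y) = x ⊗ₜ[R₁ × R₂] (y : I) :=
  TensorProduct.liftAddHom_tmul _ _ _ _

lemma ePsi_ePhi (hcomp : ∀ (s : R₁ × R₂) (x : F), s • x = s.1 • x)
    (z : F ⊗[R₁ × R₂] I) : ePsi hcomp (ePhi hcomp z) = z := by
  induction z using TensorProduct.induction_on with
  | zero => simp
  | tmul x y =>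
      rw [ePhi_tmul, ePsi_tmul, eProj_coe, ← smul_tmul,
        show ((1, 0) : R₁ × R₂) • x = ((1 : R₁) : R₁) • x from hcomp _ _, one_smul]
  | add a b ha hb => rw [map_add, map_add, ha, hb]

lemma ePart_rTensor_exact (hcomp : ∀ (s : R₁ × R₂) (x : F), s • x = s.1 • x)
    (f : F →ₗ[R₁] F) (fS : F →ₗ[R₁ × R₂] F) (hfS : ∀ x, fS x = f x)
    (hex : LinearMap.range (LinearMap.rTensor (R := R₁) (ePart R₁ R₂ I) f) =
      LinearMap.ker (LinearMap.rTensor (R := R₁) (ePart R₁ R₂ I) f)) :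
    LinearMap.range (LinearMap.rTensor (R := R₁ × R₂) I fS) =
      LinearMap.ker (LinearMap.rTensor (R := R₁ × R₂) I fS) := by
  have hΦ : ∀ z, ePhi hcomp (LinearMap.rTensor (R := R₁ × R₂) I fS z) =
      LinearMap.rTensor (R := R₁) (ePart R₁ R₂ I) f (ePhi hcomp z) := by
    intro z
    induction z using TensorProduct.induction_on with
    | zero => simp
    | tmul x y => rw [LinearMap.rTensor_tmul, ePhi_tmul, ePhi_tmul, LinearMap.rTensor_tmul, hfS]
    | add a b ha hb => rw [map_add, map_add, map_add, map_add, ha, hb]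
  have hΨ : ∀ z, ePsi hcomp (LinearMap.rTensor (R := R₁) (ePart R₁ R₂ I) f z) =
      LinearMap.rTensor (R := R₁ × R₂) I fS (ePsi hcomp z) := by
    intro z
    induction z using TensorProduct.induction_on with
    | zero => simp
    | tmul x y => rw [LinearMap.rTensor_tmul, ePsi_tmul, ePsi_tmul, LinearMap.rTensor_tmul, hfS]
    | add a b ha hb => rw [map_add, map_add, map_add, map_add, ha, hb]
  ext z
  constructor
  · rintro ⟨w, rfl⟩
    show LinearMap.rTensor (R := R₁ × R₂) I fS _ = 0
    have h1 : LinearMap.rTensor (R := R₁) (ePart R₁ R₂ I) f (ePhi hcomp w) ∈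
        LinearMap.ker (LinearMap.rTensor (R := R₁) (ePart R₁ R₂ I) f) := by
      rw [← hex]
      exact ⟨ePhi hcomp w, rfl⟩
    have h2 : ePhi hcomp (LinearMap.rTensor (R := R₁ × R₂) I fS
        (LinearMap.rTensor (R := R₁ × R₂) I fS w)) = 0 := by
      rw [hΦ, hΦ]
      exact h1
    calc LinearMap.rTensor (R := R₁ × R₂) I fS (LinearMap.rTensor (R := R₁ × R₂) I fS w)
        = ePsi hcomp (ePhi hcomp _) := (ePsi_ePhi hcomp _).symm
      _ = 0 := by rw [h2, map_zero]
  · intro hz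
    have hz' : LinearMap.rTensor (R := R₁ × R₂) I fS z = 0 := hz
    have h1 : ePhi hcomp z ∈ LinearMap.ker (LinearMap.rTensor (R := R₁) (ePart R₁ R₂ I) f) := by
      show LinearMap.rTensor (R := R₁) (ePart R₁ R₂ I) f (ePhi hcomp z) = 0
      rw [← hΦ, hz', map_zero]
    rw [← hex] at h1
    obtain ⟨w, hw⟩ := h1
    refine ⟨ePsi hcomp w, ?_⟩
    rw [← hΨ, hw, ePsi_ePhi]

end Tensor

/-- If `R₁, R₂` are coherent with finite Gorenstein weak dimension and `N` is a strongly
Gorenstein flat `R₁`-module, then `N × 0` is a strongly Gorenstein flat `R₁ × R₂`-module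
(where `R₁ × R₂` acts on `N` through the first projection). -/
theorem stronglyGorensteinFlat_prod_of_left
    (R₁ : Type u) (R₂ : Type u) [CommRing R₁] [CommRing R₂]
    (hcoh₁ : IsCoherentRing R₁) (hcoh₂ : IsCoherentRing R₂)
    (h₁ : ∃ n : ℕ, ∀ M : ModuleCat.{v} R₁, GorensteinFlatDimLE R₁ n M)
    (h₂ : ∃ n : ℕ, ∀ M : ModuleCat.{v} R₂, GorensteinFlatDimLE R₂ n M)
    (N : Type v) [AddCommGroup N] [Module R₁ N]
    (hN : IsStronglyGorensteinFlat R₁ (ModuleCat.of R₁ N)) :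
    letI : Module (R₁ × R₂) N := Module.compHom N (RingHom.fst R₁ R₂)
    IsStronglyGorensteinFlat (R₁ × R₂) (ModuleCat.of (R₁ × R₂) N) := by
  obtain ⟨F, f, hflat, hrange, ⟨e⟩, hex⟩ := hN
  letI : Module (R₁ × R₂) N := Module.compHom N (RingHom.fst R₁ R₂)
  letI : Module (R₁ × R₂) F := Module.compHom F (RingHom.fst R₁ R₂)
  show IsStronglyGorensteinFlat (R₁ × R₂) (ModuleCat.of (R₁ × R₂) N)
  have hcompF : ∀ (s : R₁ × R₂) (x : F), s • x = s.1 • x := fun _ _ => rfl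
  letI fS : (F : Type v) →ₗ[R₁ × R₂] (F : Type v) :=
    { toFun := f
      map_add' := f.map_add
      map_smul' := fun s x => f.map_smul s.1 x }
  letI : Algebra (R₁ × R₂) R₁ := (RingHom.fst R₁ R₂).toAlgebra
  haveI : IsScalarTower (R₁ × R₂) R₁ (F : Type v) := ⟨fun s r x => by
    show (s.1 * r) • x = s.1 • r • x
    rw [mul_smul]⟩
  haveI : Module.Flat (R₁ × R₂) R₁ := by
    refine Module.Flat.of_retract (R := R₁ × R₂) (M := R₁ × R₂) (N := R₁)
      ({ toFun := fun r => (r, 0)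
         map_add' := fun a b => by ext <;> simp
         map_smul' := fun s r => by
           show ((s.1 * r, (0 : R₂)) : R₁ × R₂) = s • ((r, 0) : R₁ × R₂)
           ext <;> simp [Prod.smul_def] } : R₁ →ₗ[R₁ × R₂] (R₁ × R₂))
      ({ toFun := Prod.fst
         map_add' := fun a b => rfl
         map_smul' := fun s a => rfl } : (R₁ × R₂) →ₗ[R₁ × R₂] R₁) ?_
    ext r
    rfl
  haveI hFS : Module.Flat (R₁ × R₂) (F : Type v) := Module.Flat.trans (R₁ × R₂) R₁ F
  have memS : ∀ w : (F : Type v), w ∈ LinearMap.range f → w ∈ LinearMap.range fS :=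
    fun w hw => by obtain ⟨y, hy⟩ := hw; exact ⟨y, hy⟩
  have memR : ∀ w : (F : Type v), w ∈ LinearMap.range fS → w ∈ LinearMap.range f :=
    fun w hw => by obtain ⟨y, hy⟩ := hw; exact ⟨y, hy⟩
  refine ⟨ModuleCat.of (R₁ × R₂) F, fS, hFS, ?_, ?_, ?_⟩
  · ext x
    constructor
    · intro hx
      obtain ⟨y, rfl⟩ := memR x hx
      show f (f y) = 0
      have : f y ∈ LinearMap.ker f := by rw [← hrange]; exact ⟨y, rfl⟩
      exact this
    · intro hx
      have hx' : f x = 0 := hx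
      exact memS x (by rw [hrange]; exact hx')
  · letI toF : N →ₗ[R₁ × R₂] ↥(LinearMap.range fS) :=
      { toFun := fun n => ⟨(e n : (F : Type v)), memS _ (e n).2⟩
        map_add' := fun a b => Subtype.ext (by
          show ((e (a + b) : (F : Type v))) = (e a : (F : Type v)) + (e b : (F : Type v))
          rw [e.map_add]
          rfl)
        map_smul' := fun s n => Subtype.ext (by
          show ((e (s • n) : (F : Type v))) = s • ((e n : (F : Type v)))
          have h1 : s • n = s.1 • n := rfl
          have h2 : s • ((e n : (F : Type v))) = s.1 • ((e n : (F : Type v))) := rfl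
          rw [h1, h2, e.map_smul]
          rfl) }
    refine ⟨⟨toF, fun x => e.symm ⟨x.1, memR _ x.2⟩, fun n => ?_,
      fun x => Subtype.ext ?_⟩⟩
    · exact e.symm_apply_apply n
    · show ((e (e.symm ⟨x.1, memR _ x.2⟩) : (F : Type v))) = x.1
      rw [e.apply_symm_apply]
  · intro I hInj
    letI : Module R₁ (ePart R₁ R₂ (I : Type v)) := ePartModule
    haveI hI1 : Module.Injective R₁ (ePart R₁ R₂ (I : Type v)) := ePart_injective hInj
    have hx := hex (ModuleCat.of R₁ (ePart R₁ R₂ (I : Type v))) hI1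
    exact ePart_rTensor_exact hcompF f fS (fun _ => rfl) hx
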